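/- For any α > 0, β ∈ ℝ, and a > 0, the equation β + κ/(4π) − ψ_a(κ) = 0, where ψ_a(κ) = (α/π) ∫₀^∞ p · e^{−2a√(p²+κ²)} / ((2√(p²+κ²) − α)·√(p²+κ²)) dp, has exactly one solution κ_a in (α/2, ∞). -/

import Mathlib

open Real MeasureTheory Set Filter Topology

noncomputable def sBeta (β κ : ℝ) : ℝ :=
  β + (1 / (2 * π)) * (Real.log (κ / 2) + Real.eulerMascheroniConstant)

noncomputable def phiA (α a κ : ℝ) : ℝ :=
  (α / (4 * π)) * ∫ p : ℝ,
    Real.exp (-2 * a * Real.sqrt (p ^ 2 + κ ^ 2)) /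
      ((2 * Real.sqrt (p ^ 2 + κ ^ 2) - α) * Real.sqrt (p ^ 2 + κ ^ 2))

noncomputable def phi0 (α κ : ℝ) : ℝ :=
  (α / (4 * π)) * ∫ p : ℝ,
    1 / ((2 * Real.sqrt (p ^ 2 + κ ^ 2) - α) * Real.sqrt (p ^ 2 + κ ^ 2))

noncomputable def besselK0 (x : ℝ) : ℝ := ∫ t in Set.Ioi (0:ℝ), Real.exp (-x * Real.cosh t)

noncomputable def psiA (α a κ : ℝ) : ℝ :=
  (α / π) * ∫ p in Set.Ioi (0:ℝ),
    p * Real.exp (-2 * a * Real.sqrt (p ^ 2 + κ ^ 2)) /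
      ((2 * Real.sqrt (p ^ 2 + κ ^ 2) - α) * Real.sqrt (p ^ 2 + κ ^ 2))

noncomputable def psiC (α a κ : ℝ) : ℝ :=
  (α / π) * ∫ t in Set.Ioi κ, Real.exp (-2 * t * a) / (2 * t - α)

noncomputable def fI (α a t : ℝ) : ℝ := Real.exp (-2 * t * a) / (2 * t - α)

lemma fI_pos {α a t : ℝ} (ht : α / 2 < t) : 0 < fI α a t :=
  div_pos (Real.exp_pos _) (by linarith)

lemma fI_meas {α a : ℝ} : Measurable (fI α a) := by unfold fI; fun_prop

lemma fI_integrableOn {α a κ : ℝ} (ha : 0 < a) (hκ : α / 2 < κ) :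
    IntegrableOn (fI α a) (Set.Ioi κ) := by
  have hdom : IntegrableOn (fun t => (2 * κ - α)⁻¹ * Real.exp (-(2 * a) * t)) (Set.Ioi κ) :=
    (exp_neg_integrableOn_Ioi κ (by linarith)).const_mul _
  refine hdom.mono' fI_meas.aestronglyMeasurable ?_
  filter_upwards [self_mem_ae_restrict measurableSet_Ioi] with t ht
  have h1 : (0:ℝ) < 2 * κ - α := by linarith
  have h2 : 2 * κ - α ≤ 2 * t - α := by simp only [Set.mem_Ioi] at ht; linarith
  have h3 : 0 ≤ fI α a t := (fI_pos (lt_of_lt_of_le hκ (by simp only [Set.mem_Ioi] at ht; linarith))).le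
  rw [Real.norm_eq_abs, abs_of_nonneg h3]
  have : fI α a t ≤ Real.exp (-2 * t * a) / (2 * κ - α) :=
    div_le_div_of_nonneg_left (Real.exp_pos _).le h1 h2
  calc fI α a t ≤ Real.exp (-2 * t * a) / (2 * κ - α) := this
    _ = (2 * κ - α)⁻¹ * Real.exp (-(2 * a) * t) := by rw [div_eq_inv_mul]; ring_nf

lemma F_split {α a : ℝ} (ha : 0 < a) {x y : ℝ} (hx : α / 2 < x) (hxy : x ≤ y) :
    ∫ t in Set.Ioi x, fI α a t
      = (∫ t in Set.Ioc x y, fI α a t) + ∫ t in Set.Ioi y, fI α a t := by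
  rw [← Set.Ioc_union_Ioi_eq_Ioi hxy]
  exact setIntegral_union (Set.Ioc_disjoint_Ioi le_rfl) measurableSet_Ioi
    ((fI_integrableOn ha hx).mono_set Set.Ioc_subset_Ioi_self)
    (fI_integrableOn ha (lt_of_lt_of_le hx hxy))

lemma F_nonneg {α a x : ℝ} (hx : α / 2 < x) : 0 ≤ ∫ t in Set.Ioi x, fI α a t :=
  setIntegral_nonneg measurableSet_Ioi fun t ht => (fI_pos (lt_trans hx ht)).le

lemma F_anti {α a : ℝ} (ha : 0 < a) {x y : ℝ} (hx : α / 2 < x) (hxy : x < y) :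
    ∫ t in Set.Ioi y, fI α a t < ∫ t in Set.Ioi x, fI α a t := by
  rw [F_split ha hx hxy.le]
  have hpos : 0 < ∫ t in Set.Ioc x y, fI α a t := by
    rw [← intervalIntegral.integral_of_le hxy.le]
    refine intervalIntegral.intervalIntegral_pos_of_pos_on ?_ ?_ hxy
    · exact (intervalIntegrable_iff_integrableOn_Ioc_of_le hxy.le).2
        ((fI_integrableOn ha hx).mono_set Set.Ioc_subset_Ioi_self)
    · intro t ht; exact fI_pos (lt_trans hx ht.1)
  linarith

lemma F_contAt {α a : ℝ} (ha : 0 < a) {κ : ℝ} (hκ : α / 2 < κ) :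
    ContinuousAt (fun u => ∫ t in Set.Ioi u, fI α a t) κ := by
  set m := (α / 2 + κ) / 2 with hm_def
  have hm : α / 2 < m := by simp only [hm_def]; linarith
  have hmκ : m < κ := by simp only [hm_def]; linarith
  have heq : ∀ u ∈ Set.Ioi m, (∫ t in Set.Ioi m, fI α a t) - (∫ t in m..u, fI α a t)
      = ∫ t in Set.Ioi u, fI α a t := by
    intro u hu
    rw [intervalIntegral.integral_of_le (le_of_lt hu), F_split ha hm (le_of_lt hu)]
    ring
  have hder : ContinuousAt (fun u => (∫ t in Set.Ioi m, fI α a t) - ∫ t in m..u, fI α a t) κ := by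
    refine ContinuousAt.sub continuousAt_const ?_
    have hint : IntervalIntegrable (fI α a) volume m κ :=
      (intervalIntegrable_iff_integrableOn_Ioc_of_le hmκ.le).2
        ((fI_integrableOn ha hm).mono_set Set.Ioc_subset_Ioi_self)
    have hmeasAt : StronglyMeasurableAtFilter (fI α a) (𝓝 κ) volume :=
      fI_meas.stronglyMeasurable.stronglyMeasurableAtFilter
    have hcontAt : ContinuousAt (fI α a) κ := by
      unfold fI
      exact ContinuousAt.div (by fun_prop) (by fun_prop) (by intro h; linarith [h])
    exact (intervalIntegral.integral_hasDerivAt_right hint hmeasAt hcontAt).continuousAt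
  exact hder.congr (Filter.eventuallyEq_of_mem (Ioi_mem_nhds hmκ) heq)

lemma log_intervalIntegral {α x T : ℝ} (hx : α / 2 < x) (hxT : x ≤ T) :
    ∫ t in x..T, (2 * t - α)⁻¹ = Real.log (2 * T - α) / 2 - Real.log (2 * x - α) / 2 := by
  have hcont : ContinuousOn (fun t : ℝ => (2 * t - α)⁻¹) (Set.uIcc x T) := by
    rw [Set.uIcc_of_le hxT]
    intro t ht
    exact ContinuousWithinAt.inv₀
      ((continuous_const.mul continuous_id').sub continuous_const).continuousWithinAt
      (by have := ht.1; intro h; linarith [h])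
  have hder : ∀ t ∈ Set.uIcc x T,
      HasDerivAt (fun t => Real.log (2 * t - α) / 2) ((2 * t - α)⁻¹) t := by
    intro t ht
    rw [Set.uIcc_of_le hxT] at ht
    have ht' : (0:ℝ) < 2 * t - α := by have := ht.1; linarith
    have h1 : HasDerivAt (fun t : ℝ => 2 * t - α) 2 t := by
      simpa using ((hasDerivAt_id t).const_mul 2).sub_const α
    have h2 := (h1.log (ne_of_gt ht')).div_const 2
    exact h2.congr_deriv (by ring)
  rw [intervalIntegral.integral_eq_sub_of_hasDerivAt hder (hcont.intervalIntegrable)]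

lemma F_lower {α a : ℝ} (ha : 0 < a) {x T : ℝ} (hx : α / 2 < x) (hxT : x ≤ T) :
    Real.exp (-2 * T * a) * (Real.log (2 * T - α) / 2 - Real.log (2 * x - α) / 2)
      ≤ ∫ t in Set.Ioi x, fI α a t := by
  have hT : α / 2 < T := lt_of_lt_of_le hx hxT
  have hlow_cont : ContinuousOn (fun t : ℝ => Real.exp (-2 * T * a) * (2 * t - α)⁻¹)
      (Set.Icc x T) := by
    refine ContinuousOn.mul continuousOn_const ?_
    intro t ht
    exact ContinuousWithinAt.inv₀
      ((continuous_const.mul continuous_id').sub continuous_const).continuousWithinAt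
      (by have := ht.1; intro h; linarith [h])
  have hlow_int : IntegrableOn (fun t : ℝ => Real.exp (-2 * T * a) * (2 * t - α)⁻¹)
      (Set.Ioc x T) := (hlow_cont.integrableOn_Icc).mono_set Set.Ioc_subset_Icc_self
  have hfi : IntegrableOn (fI α a) (Set.Ioc x T) :=
    (fI_integrableOn ha hx).mono_set Set.Ioc_subset_Ioi_self
  have hmono : ∀ t ∈ Set.Ioc x T,
      Real.exp (-2 * T * a) * (2 * t - α)⁻¹ ≤ fI α a t := by
    intro t ht
    have ht1 : (0:ℝ) < 2 * t - α := by have := ht.1; linarith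
    have hexp : Real.exp (-2 * T * a) ≤ Real.exp (-2 * t * a) := by
      apply Real.exp_le_exp.2; nlinarith [ht.2]
    have : Real.exp (-2 * T * a) * (2 * t - α)⁻¹ ≤ Real.exp (-2 * t * a) * (2 * t - α)⁻¹ :=
      mul_le_mul_of_nonneg_right hexp (inv_nonneg.2 ht1.le)
    simpa [fI, div_eq_mul_inv] using this
  have step1 : Real.exp (-2 * T * a) * (Real.log (2 * T - α) / 2 - Real.log (2 * x - α) / 2)
      = ∫ t in Set.Ioc x T, Real.exp (-2 * T * a) * (2 * t - α)⁻¹ := by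
    rw [← intervalIntegral.integral_of_le hxT, intervalIntegral.integral_const_mul,
      log_intervalIntegral hx hxT]
  rw [step1, F_split ha hx hxT]
  have h2 : (0:ℝ) ≤ ∫ t in Set.Ioi T, fI α a t :=
    setIntegral_nonneg measurableSet_Ioi fun t ht =>
      (div_pos (Real.exp_pos _) (by have : T < t := ht; linarith)).le
  have h1 : (∫ t in Set.Ioc x T, Real.exp (-2 * T * a) * (2 * t - α)⁻¹)
      ≤ ∫ t in Set.Ioc x T, fI α a t :=
    setIntegral_mono_on hlow_int hfi measurableSet_Ioc hmono
  linarith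

lemma subst_lemma {κ : ℝ} (hκ : 0 < κ) (α a : ℝ) :
    (∫ p in Set.Ioi (0:ℝ), p * Real.exp (-2 * a * Real.sqrt (p ^ 2 + κ ^ 2)) /
      ((2 * Real.sqrt (p ^ 2 + κ ^ 2) - α) * Real.sqrt (p ^ 2 + κ ^ 2)))
    = ∫ t in Set.Ioi κ, fI α a t := by
  set φ : ℝ → ℝ := fun p => Real.sqrt (p ^ 2 + κ ^ 2) with hφ
  have hsq : ∀ p : ℝ, (0:ℝ) < p ^ 2 + κ ^ 2 := fun p => by positivity
  have hφpos : ∀ p : ℝ, 0 < φ p := fun p => Real.sqrt_pos.2 (hsq p)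
  have hderiv : ∀ p ∈ Set.Ioi (0:ℝ),
      HasDerivWithinAt φ (p / Real.sqrt (p ^ 2 + κ ^ 2)) (Set.Ioi (0:ℝ)) p := by
    intro p _
    have h1 : HasDerivAt (fun p : ℝ => p ^ 2 + κ ^ 2) (2 * p) p := by
      simpa using (hasDerivAt_pow 2 p).add_const (κ ^ 2)
    have h2 := (Real.hasDerivAt_sqrt (ne_of_gt (hsq p))).comp p h1
    have h3 : 1 / (2 * Real.sqrt (p ^ 2 + κ ^ 2)) * (2 * p) = p / Real.sqrt (p ^ 2 + κ ^ 2) := by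
      have := (hφpos p).ne'
      field_simp
    rw [h3] at h2
    exact h2.hasDerivWithinAt
  have hmono : StrictMonoOn φ (Set.Ioi (0:ℝ)) := by
    intro p hp q hq hpq
    have : p ^ 2 + κ ^ 2 < q ^ 2 + κ ^ 2 := by
      have hp0 : (0:ℝ) < p := hp
      nlinarith
    exact Real.sqrt_lt_sqrt (hsq p).le this
  have himg : φ '' Set.Ioi (0:ℝ) = Set.Ioi κ := by
    ext t
    constructor
    · rintro ⟨p, hp, rfl⟩
      have hp0 : (0:ℝ) < p := hp
      have h1 : κ ^ 2 < p ^ 2 + κ ^ 2 := by nlinarith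
      have h2 := Real.sqrt_lt_sqrt (sq_nonneg κ) h1
      rwa [Real.sqrt_sq hκ.le] at h2
    · intro ht
      have ht' : κ < t := ht
      have ht0 : (0:ℝ) < t := lt_trans hκ ht'
      have hsub : (0:ℝ) < t ^ 2 - κ ^ 2 := by nlinarith
      refine ⟨Real.sqrt (t ^ 2 - κ ^ 2), Real.sqrt_pos.2 hsub, ?_⟩
      simp only [hφ]
      rw [Real.sq_sqrt hsub.le, sub_add_cancel, Real.sqrt_sq ht0.le]
  have key := MeasureTheory.integral_image_eq_integral_abs_deriv_smul (f := φ)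
    (f' := fun p => p / Real.sqrt (p ^ 2 + κ ^ 2)) measurableSet_Ioi hderiv
    (hmono.injOn) (fI α a)
  rw [himg] at key
  rw [key]
  refine setIntegral_congr_fun measurableSet_Ioi fun p hp => ?_
  have hp0 : (0:ℝ) < p := hp
  have hs := hφpos p
  simp only [smul_eq_mul, fI, hφ]
  rw [abs_of_nonneg (div_nonneg hp0.le (Real.sqrt_nonneg _)), div_mul_div_comm]
  rw [mul_comm (2 * Real.sqrt (p ^ 2 + κ ^ 2) - α) (Real.sqrt (p ^ 2 + κ ^ 2))]
  ring_nf

theorem stmt15 (α β a : ℝ) (hα : 0 < α) (ha : 0 < a) :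
    ∃! κ : ℝ, κ ∈ Set.Ioi (α / 2) ∧ β + κ / (4 * π) - psiA α a κ = 0 := by
  have hπ : (0:ℝ) < π := Real.pi_pos
  have hαπ : (0:ℝ) < α / π := div_pos hα hπ
  set F : ℝ → ℝ := fun u => ∫ t in Set.Ioi u, fI α a t with hF
  set g : ℝ → ℝ := fun κ => β + κ / (4 * π) - (α / π) * F κ with hg
  have hc2 : (0:ℝ) < α / 2 := by linarith
  -- psiA rewrites to (α/π) * F on Ioi (α/2)
  have hpsi : ∀ κ : ℝ, α / 2 < κ → psiA α a κ = (α / π) * F κ := by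
    intro κ hκ
    simp only [psiA, hF]
    rw [subst_lemma (lt_trans hc2 hκ) α a]
  -- g strictly monotone on Ioi (α/2)
  have hmono : StrictMonoOn g (Set.Ioi (α / 2)) := by
    intro x hx y hy hxy
    have h4π : (0:ℝ) < 4 * π := by linarith
    have h1 : x / (4 * π) < y / (4 * π) := by gcongr
    have h2 : F y < F x := F_anti ha hx hxy
    have h3 : (α / π) * F y ≤ (α / π) * F x := by nlinarith
    simp only [hg]
    linarith
  -- g continuous at each point of Ioi (α/2)
  have hcont : ∀ κ : ℝ, α / 2 < κ → ContinuousAt g κ := by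
    intro κ hκ
    simp only [hg]
    exact ((continuousAt_const.add (continuousAt_id.div_const _)).sub
      (continuousAt_const.mul (F_contAt ha hκ)))
  -- point y with g y > 0
  set T : ℝ := α / 2 + 1 with hT
  have hTc : α / 2 < T := by simp only [hT]; linarith
  set y : ℝ := max (α / 2 + 2) (4 * π * (|β| + (α / π) * F T + 1)) with hy
  have hy2 : α / 2 + 2 ≤ y := le_max_left _ _
  have hyT : T < y := by simp only [hT]; linarith
  have hgy : 0 < g y := by
    have hFy : F y ≤ F T := (F_anti ha hTc hyT).le
    have h4π : (0:ℝ) < 4 * π := by linarith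
    have hyb : 4 * π * (|β| + (α / π) * F T + 1) ≤ y := le_max_right _ _
    have hdiv : |β| + (α / π) * F T + 1 ≤ y / (4 * π) := by
      rw [le_div_iff₀ h4π] at *
      nlinarith
    have hβ : -|β| ≤ β := neg_abs_le β
    have hFT : (α / π) * F y ≤ (α / π) * F T := by nlinarith
    simp only [hg]
    linarith
  -- point x with g x < 0
  set M : ℝ := β + T / (4 * π) with hM
  set C : ℝ := 2 * π * Real.exp (2 * T * a) * (|M| + 1) / α with hC
  have hC0 : 0 < C := by
    apply div_pos ?_ hα
    have h1 : (0:ℝ) < Real.exp (2 * T * a) := Real.exp_pos _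
    have h2 : (0:ℝ) < |M| + 1 := by positivity
    positivity
  set x : ℝ := α / 2 + Real.exp (-C) with hx
  have hxc : α / 2 < x := by
    simp only [hx]
    linarith [Real.exp_pos (-C)]
  have hxT : x < T := by
    simp only [hx, hT]
    have := Real.exp_lt_one_iff.2 (neg_lt_zero.2 hC0)
    linarith
  have hgx : g x < 0 := by
    have hlog : Real.log (2 * x - α) = Real.log 2 - C := by
      have h2x : 2 * x - α = 2 * Real.exp (-C) := by simp only [hx]; ring
      rw [h2x, Real.log_mul two_ne_zero (Real.exp_ne_zero _), Real.log_exp]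
      ring
    have hlogT : Real.log (2 * T - α) = Real.log 2 := by
      have : 2 * T - α = 2 := by simp only [hT]; ring
      rw [this]
    have hlb := F_lower ha hxc hxT.le
    rw [hlog, hlogT] at hlb
    have hsimp : Real.exp (-2 * T * a) * (Real.log 2 / 2 - (Real.log 2 - C) / 2)
        = Real.exp (-2 * T * a) * (C / 2) := by ring
    rw [hsimp] at hlb
    have hkey : (α / π) * (Real.exp (-2 * T * a) * (C / 2)) = |M| + 1 := by
      simp only [hC]
      rw [show (-2 : ℝ) * T * a = -(2 * T * a) by ring, Real.exp_neg]
      have hexp := Real.exp_ne_zero (2 * T * a)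
      field_simp
    have h4π : (0:ℝ) < 4 * π := by linarith
    have hxTdiv : x / (4 * π) ≤ T / (4 * π) := by gcongr
    have hFx : (α / π) * (Real.exp (-2 * T * a) * (C / 2)) ≤ (α / π) * F x := by nlinarith
    rw [hkey] at hFx
    have hMb : M ≤ |M| := le_abs_self M
    simp only [hg]
    simp only [hM] at hMb
    linarith
  -- IVT
  have hxy : x < y := lt_trans hxT hyT
  have hIcc : Set.Icc x y ⊆ Set.Ioi (α / 2) := fun z hz => lt_of_lt_of_le hxc hz.1
  have hcontOn : ContinuousOn g (Set.Icc x y) := fun z hz =>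
    (hcont z (hIcc hz)).continuousWithinAt
  have h0mem : (0:ℝ) ∈ Set.Ioo (g x) (g y) := ⟨hgx, hgy⟩
  obtain ⟨κ, hκmem, hκ0⟩ := intermediate_value_Ioo hxy.le hcontOn h0mem
  have hκIoi : κ ∈ Set.Ioi (α / 2) := lt_trans hxc hκmem.1
  refine ⟨κ, ⟨hκIoi, ?_⟩, ?_⟩
  · rw [hpsi κ hκIoi]
    have : g κ = 0 := hκ0
    simp only [hg] at this
    linarith
  · rintro z ⟨hz, hz0⟩
    rw [hpsi z hz] at hz0
    have hgz : g z = 0 := by simp only [hg]; linarith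
    have hgκ : g κ = 0 := hκ0
    exact hmono.injOn hz hκIoi (by rw [hgz, hgκ])
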